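/- In the Artin group A[B_{n+1}] of type B_{n+1} with standard generators r_1, ..., r_{n+1}, the element ρ_B = r_1 r_2 ⋯ r_n r_{n+1} satisfies ρ_B r_i ρ_B^{-1} = r_{i+1} for all 1 ≤ i ≤ n−1, and ρ_B² r_n ρ_B^{-2} = r_1. -/

import Mathlib

open FreeGroup in
/-- Defining relations of the Artin group of type `B m`: generators indexed by
`Fin m` (index `k` represents `r (k+1)`), with an order-4 braid relation between
the last two generators. -/
def ArtinBRels (m : ℕ) : Set (FreeGroup (Fin m)) :=
  {w | ∃ i j : Fin m,
    ((j : ℕ) = (i : ℕ) + 1 ∧ (j : ℕ) + 1 < m ∧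
      w = of i * of j * of i * (of j * of i * of j)⁻¹) ∨
    ((j : ℕ) = (i : ℕ) + 1 ∧ (j : ℕ) + 1 = m ∧
      w = of i * of j * of i * of j * (of j * of i * of j * of i)⁻¹) ∨
    ((i : ℕ) + 1 < (j : ℕ) ∧ w = of i * of j * (of j * of i)⁻¹)}

/-- The Artin group of type `B m`. -/
def ArtinB (m : ℕ) : Type := PresentedGroup (ArtinBRels m)

instance (m : ℕ) : Group (ArtinB m) :=
  inferInstanceAs (Group (PresentedGroup (ArtinBRels m)))

/-- The standard generator `r i` (1-based, so `1 ≤ i ≤ m`) of `A[B m]`. -/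
def rB (m : ℕ) (i : ℕ) : ArtinB m :=
  if h : i - 1 < m then PresentedGroup.of ⟨i - 1, h⟩ else 1

/-- `ρ_B = r₁ r₂ ⋯ r_{n+1}` in `A[B (n+1)]`. -/
def rhoB (n : ℕ) : ArtinB (n + 1) :=
  ((List.range (n + 1)).map (fun k => rB (n + 1) (k + 1))).prod

namespace ArtinBAux
variable {m : ℕ}

def mk' (w : FreeGroup (Fin m)) : ArtinB m := QuotientGroup.mk w

lemma mk'_mul (a b : FreeGroup (Fin m)) : mk' (a * b) = mk' a * mk' b := rfl
lemma mk'_inv (a : FreeGroup (Fin m)) : mk' a⁻¹ = (mk' a)⁻¹ := rfl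

lemma mk_rel {w : FreeGroup (Fin m)} (h : w ∈ ArtinBRels m) : mk' w = 1 :=
  (QuotientGroup.eq_one_iff _).mpr (Subgroup.subset_normalClosure h)

lemma rB_eq (i : ℕ) (h2 : i - 1 < m) :
    rB m i = mk' (FreeGroup.of (⟨i - 1, h2⟩ : Fin m)) := by
  rw [rB]; exact dif_pos h2

lemma comm_rB (a b : ℕ) (ha : 1 ≤ a) (hab : a + 1 < b) (hb : b ≤ m) :
    rB m a * rB m b = rB m b * rB m a := by
  have h := mk_rel (m := m) ⟨⟨a - 1, by omega⟩, ⟨b - 1, by omega⟩,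
    Or.inr (Or.inr ⟨by simp; omega, rfl⟩)⟩
  rw [mk'_mul, mk'_inv, mk'_mul, mul_inv_eq_one] at h
  rw [rB_eq a (by omega), rB_eq b (by omega)]
  exact h

lemma braid_rB (a : ℕ) (ha : 1 ≤ a) (hb : a + 2 ≤ m) :
    rB m a * rB m (a + 1) * rB m a = rB m (a + 1) * rB m a * rB m (a + 1) := by
  have h := mk_rel (m := m) ⟨⟨a - 1, by omega⟩, ⟨a, by omega⟩,
    Or.inl ⟨by simp; omega, by simp; omega, rfl⟩⟩
  rw [mk'_mul, mk'_inv, mk'_mul, mk'_mul, mk'_mul, mul_inv_eq_one] at h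
  rw [rB_eq a (by omega), rB_eq (a + 1) (by omega)]
  simpa [mk'_mul] using h

lemma four_rB (a : ℕ) (ha : 1 ≤ a) (hb : a + 1 = m) :
    rB m a * rB m (a + 1) * rB m a * rB m (a + 1)
      = rB m (a + 1) * rB m a * rB m (a + 1) * rB m a := by
  have h := mk_rel (m := m) ⟨⟨a - 1, by omega⟩, ⟨a, by omega⟩,
    Or.inr (Or.inl ⟨by simp; omega, by simp; omega, rfl⟩)⟩
  rw [mk'_mul, mk'_inv, mk'_mul, mk'_mul, mk'_mul, mk'_mul, mk'_mul, mul_inv_eq_one] at h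
  rw [rB_eq a (by omega), rB_eq (a + 1) (by omega)]
  simpa [mk'_mul] using h

/-- `T n a len = r_a r_{a+1} ⋯ r_{a+len-1}` in `A[B (n+1)]`. -/
def T (n a len : ℕ) : ArtinB (n + 1) :=
  ((List.range len).map (fun k => rB (n + 1) (k + a))).prod

variable {n : ℕ}

lemma rhoB_eq_T : rhoB n = T n 1 (n + 1) := rfl

lemma T_zero (a : ℕ) : T n a 0 = 1 := rfl

lemma T_succ (a len : ℕ) : T n a (len + 1) = T n a len * rB (n + 1) (len + a) := by
  unfold T
  rw [List.range_succ, List.map_append, List.prod_append]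
  simp

lemma T_succ' (a len : ℕ) : T n a (len + 1) = rB (n + 1) a * T n (a + 1) len := by
  unfold T
  rw [List.range_succ_eq_map, List.map_cons, List.prod_cons, List.map_map]
  congr 1
  · congr 1; omega
  · apply congrArg
    apply List.map_congr_left
    intro k _
    simp only [Function.comp_apply]
    congr 1
    omega

lemma T_split (a p q : ℕ) : T n a (p + q) = T n a p * T n (a + p) q := by
  induction q with
  | zero => simp [T_zero]
  | succ q ih =>
      rw [← Nat.add_assoc, T_succ, ih, T_succ, mul_assoc]
      congr 3
      omega

/-- `r_j` commutes with the block `r_a ⋯ r_{a+len-1}` when `a + len < j`. -/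
lemma T_comm_lt (j a len : ℕ) (ha : 1 ≤ a) (h1 : a + len < j) (h2 : j ≤ n + 1) :
    T n a len * rB (n + 1) j = rB (n + 1) j * T n a len := by
  induction len with
  | zero => simp [T_zero]
  | succ len ih =>
      rw [T_succ]
      calc T n a len * rB (n + 1) (len + a) * rB (n + 1) j
          = T n a len * (rB (n + 1) (len + a) * rB (n + 1) j) := by group
        _ = T n a len * (rB (n + 1) j * rB (n + 1) (len + a)) := by
            rw [comm_rB (len + a) j (by omega) (by omega) h2]
        _ = (T n a len * rB (n + 1) j) * rB (n + 1) (len + a) := by group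
        _ = (rB (n + 1) j * T n a len) * rB (n + 1) (len + a) := by rw [ih (by omega)]
        _ = rB (n + 1) j * (T n a len * rB (n + 1) (len + a)) := by group

/-- `r_i` commutes with the block `r_a ⋯ r_{a+len-1}` when `i + 1 < a`. -/
lemma T_comm_gt (i a len : ℕ) (hi : 1 ≤ i) (h1 : i + 1 < a) (h2 : a + len ≤ n + 2) :
    T n a len * rB (n + 1) i = rB (n + 1) i * T n a len := by
  induction len with
  | zero => simp [T_zero]
  | succ len ih =>
      rw [T_succ]
      calc T n a len * rB (n + 1) (len + a) * rB (n + 1) i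
          = T n a len * (rB (n + 1) (len + a) * rB (n + 1) i) := by group
        _ = T n a len * (rB (n + 1) i * rB (n + 1) (len + a)) := by
            rw [← comm_rB i (len + a) hi (by omega) (by omega)]
        _ = (T n a len * rB (n + 1) i) * rB (n + 1) (len + a) := by group
        _ = (rB (n + 1) i * T n a len) * rB (n + 1) (len + a) := by rw [ih (by omega)]
        _ = rB (n + 1) i * (T n a len * rB (n + 1) (len + a)) := by group

lemma lemA (i : ℕ) (hi : 1 ≤ i) (hin : i ≤ n - 1) (hn : 1 ≤ n) :
    rhoB n * rB (n + 1) i = rB (n + 1) (i + 1) * rhoB n := by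
  obtain ⟨p, rfl⟩ : ∃ p, i = p + 1 := ⟨i - 1, by omega⟩
  have e1 : rhoB n = T n 1 (p + 2) * T n (1 + (p + 2)) (n - p - 1) := by
    have h := T_split (n := n) 1 (p + 2) (n - p - 1)
    rw [show (p + 2) + (n - p - 1) = n + 1 by omega] at h
    rw [rhoB_eq_T, h]
  have h1 : T n 1 (p + 2) = T n 1 p * rB (n + 1) (p + 1) * rB (n + 1) (p + 1 + 1) := by
    rw [T_succ, T_succ]
  have hc1 := T_comm_gt (n := n) (p + 1) (1 + (p + 2)) (n - p - 1) (by omega) (by omega) (by omega)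
  have hc2 := T_comm_lt (n := n) (p + 1 + 1) 1 p (by omega) (by omega) (by omega)
  have hb := braid_rB (m := n + 1) (p + 1) (by omega) (by omega)
  calc rhoB n * rB (n + 1) (p + 1)
      = T n 1 (p + 2) * (T n (1 + (p + 2)) (n - p - 1) * rB (n + 1) (p + 1)) := by
        rw [e1]; group
    _ = T n 1 (p + 2) * (rB (n + 1) (p + 1) * T n (1 + (p + 2)) (n - p - 1)) := by rw [hc1]
    _ = T n 1 p * (rB (n + 1) (p + 1) * rB (n + 1) (p + 1 + 1) * rB (n + 1) (p + 1))
          * T n (1 + (p + 2)) (n - p - 1) := by rw [h1]; group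
    _ = T n 1 p * (rB (n + 1) (p + 1 + 1) * rB (n + 1) (p + 1) * rB (n + 1) (p + 1 + 1))
          * T n (1 + (p + 2)) (n - p - 1) := by rw [hb]
    _ = (T n 1 p * rB (n + 1) (p + 1 + 1)) * (rB (n + 1) (p + 1) * rB (n + 1) (p + 1 + 1))
          * T n (1 + (p + 2)) (n - p - 1) := by group
    _ = (rB (n + 1) (p + 1 + 1) * T n 1 p) * (rB (n + 1) (p + 1) * rB (n + 1) (p + 1 + 1))
          * T n (1 + (p + 2)) (n - p - 1) := by rw [hc2]
    _ = rB (n + 1) (p + 1 + 1) * ((T n 1 p * rB (n + 1) (p + 1) * rB (n + 1) (p + 1 + 1))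
          * T n (1 + (p + 2)) (n - p - 1)) := by group
    _ = rB (n + 1) (p + 1 + 1) * rhoB n := by rw [← h1, ← e1]

lemma lem2 (hn : 1 ≤ n) :
    rhoB n * rB (n + 1) n * rB (n + 1) (n + 1)
      = rB (n + 1) (n + 1) * (rhoB n * rB (n + 1) n) := by
  obtain ⟨q, rfl⟩ : ∃ q, n = q + 1 := ⟨n - 1, by omega⟩
  have hsplit : rhoB (q + 1) = T (q + 1) 1 q * rB (q + 2) (q + 1) * rB (q + 2) (q + 1 + 1) := by
    rw [rhoB_eq_T]
    show T (q + 1) 1 (q + 2) = _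
    rw [T_succ, T_succ]
  have h4 := four_rB (m := q + 2) (q + 1) (by omega) (by omega)
  have hc := T_comm_lt (n := q + 1) (q + 1 + 1) 1 q (by omega) (by omega) (by omega)
  calc rhoB (q + 1) * rB (q + 2) (q + 1) * rB (q + 2) (q + 1 + 1)
      = T (q + 1) 1 q * (rB (q + 2) (q + 1) * rB (q + 2) (q + 1 + 1) * rB (q + 2) (q + 1)
          * rB (q + 2) (q + 1 + 1)) := by rw [hsplit]; group
    _ = T (q + 1) 1 q * (rB (q + 2) (q + 1 + 1) * rB (q + 2) (q + 1) * rB (q + 2) (q + 1 + 1)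
          * rB (q + 2) (q + 1)) := by rw [h4]
    _ = (T (q + 1) 1 q * rB (q + 2) (q + 1 + 1)) * (rB (q + 2) (q + 1) * rB (q + 2) (q + 1 + 1)
          * rB (q + 2) (q + 1)) := by group
    _ = (rB (q + 2) (q + 1 + 1) * T (q + 1) 1 q) * (rB (q + 2) (q + 1) * rB (q + 2) (q + 1 + 1)
          * rB (q + 2) (q + 1)) := by rw [hc]
    _ = rB (q + 2) (q + 1 + 1) * ((T (q + 1) 1 q * rB (q + 2) (q + 1) * rB (q + 2) (q + 1 + 1))
          * rB (q + 2) (q + 1)) := by group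
    _ = rB (q + 2) (q + 1 + 1) * (rhoB (q + 1) * rB (q + 2) (q + 1)) := by rw [← hsplit]

lemma lem3 (len : ℕ) (hlen : len ≤ n - 1) (hn : 1 ≤ n) :
    rhoB n * T n 1 len = T n 2 len * rhoB n := by
  induction len with
  | zero => simp [T_zero]
  | succ len ih =>
      have e2 : T n 2 (len + 1) = T n 2 len * rB (n + 1) (len + 2) := T_succ 2 len
      calc rhoB n * T n 1 (len + 1)
          = (rhoB n * T n 1 len) * rB (n + 1) (len + 1) := by rw [T_succ]; group
        _ = T n 2 len * (rhoB n * rB (n + 1) (len + 1)) := by rw [ih (by omega)]; group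
        _ = T n 2 len * (rB (n + 1) (len + 1 + 1) * rhoB n) := by
            rw [lemA (len + 1) (by omega) (by omega) hn]
        _ = T n 2 (len + 1) * rhoB n := by
            rw [e2, show len + 1 + 1 = len + 2 by omega]; group

theorem stmt4' (n : ℕ) (hn : 1 ≤ n) :
    (∀ i : ℕ, 1 ≤ i → i ≤ n - 1 →
      rhoB n * rB (n + 1) i * (rhoB n)⁻¹ = rB (n + 1) (i + 1)) ∧
    rhoB n ^ 2 * rB (n + 1) n * (rhoB n ^ 2)⁻¹ = rB (n + 1) 1 := by
  constructor
  · intro i hi hin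
    rw [lemA i hi hin hn]
    group
  · obtain ⟨q, rfl⟩ : ∃ q, n = q + 1 := ⟨n - 1, by omega⟩
    rw [sq]
    have e1 : rhoB (q + 1)
        = T (q + 1) 1 q * rB (q + 1 + 1) (q + 1) * rB (q + 1 + 1) (q + 1 + 1) := by
      rw [rhoB_eq_T]
      show T (q + 1) 1 (q + 2) = _
      rw [T_succ, T_succ]
    have e3 : T (q + 1) 2 q * rB (q + 1 + 1) (q + 1 + 1)
        = (rB (q + 1 + 1) 1)⁻¹ * rhoB (q + 1) := by
      have h1 : rhoB (q + 1) = rB (q + 1 + 1) 1 * T (q + 1) 2 (q + 1) := by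
        rw [rhoB_eq_T]
        show T (q + 1) 1 (q + 1 + 1) = _
        exact T_succ' 1 (q + 1)
      have h2 : T (q + 1) 2 (q + 1) = T (q + 1) 2 q * rB (q + 1 + 1) (q + 1 + 1) := by
        rw [T_succ]
      rw [h1, h2]
      group
    have key : (rhoB (q + 1) * rhoB (q + 1)) * rB (q + 1 + 1) (q + 1)
        = (rB (q + 1 + 1) 1)⁻¹
          * ((rhoB (q + 1) * rhoB (q + 1)) * (rB (q + 1 + 1) (q + 1) * rB (q + 1 + 1) (q + 1))) := by
      calc (rhoB (q + 1) * rhoB (q + 1)) * rB (q + 1 + 1) (q + 1)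
          = rhoB (q + 1) * (T (q + 1) 1 q
              * (rB (q + 1 + 1) (q + 1) * rB (q + 1 + 1) (q + 1 + 1) * rB (q + 1 + 1) (q + 1))) := by
            nth_rewrite 2 [e1]
            group
        _ = (rhoB (q + 1) * T (q + 1) 1 q)
              * (rB (q + 1 + 1) (q + 1) * rB (q + 1 + 1) (q + 1 + 1) * rB (q + 1 + 1) (q + 1)) := by
            group
        _ = (T (q + 1) 2 q * rhoB (q + 1))
              * (rB (q + 1 + 1) (q + 1) * rB (q + 1 + 1) (q + 1 + 1) * rB (q + 1 + 1) (q + 1)) := by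
            rw [lem3 q (by omega) hn]
        _ = T (q + 1) 2 q * (rhoB (q + 1) * rB (q + 1 + 1) (q + 1) * rB (q + 1 + 1) (q + 1 + 1))
              * rB (q + 1 + 1) (q + 1) := by group
        _ = T (q + 1) 2 q * (rB (q + 1 + 1) (q + 1 + 1) * (rhoB (q + 1) * rB (q + 1 + 1) (q + 1)))
              * rB (q + 1 + 1) (q + 1) := by rw [lem2 hn]
        _ = (T (q + 1) 2 q * rB (q + 1 + 1) (q + 1 + 1))
              * (rhoB (q + 1) * (rB (q + 1 + 1) (q + 1) * rB (q + 1 + 1) (q + 1))) := by group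
        _ = ((rB (q + 1 + 1) 1)⁻¹ * rhoB (q + 1))
              * (rhoB (q + 1) * (rB (q + 1 + 1) (q + 1) * rB (q + 1 + 1) (q + 1))) := by rw [e3]
        _ = (rB (q + 1 + 1) 1)⁻¹
              * ((rhoB (q + 1) * rhoB (q + 1)) * (rB (q + 1 + 1) (q + 1) * rB (q + 1 + 1) (q + 1))) := by group
    have key2 : (rhoB (q + 1) * rhoB (q + 1)) * (rB (q + 1 + 1) (q + 1) * rB (q + 1 + 1) (q + 1))
        = rB (q + 1 + 1) 1 * ((rhoB (q + 1) * rhoB (q + 1)) * rB (q + 1 + 1) (q + 1)) := by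
      rw [key]; group
    have hY : ((rhoB (q + 1) * rhoB (q + 1)) * rB (q + 1 + 1) (q + 1) * ((rhoB (q + 1) * rhoB (q + 1)))⁻¹)
          * ((rhoB (q + 1) * rhoB (q + 1)) * rB (q + 1 + 1) (q + 1) * ((rhoB (q + 1) * rhoB (q + 1)))⁻¹)
        = rB (q + 1 + 1) 1 * ((rhoB (q + 1) * rhoB (q + 1)) * rB (q + 1 + 1) (q + 1) * ((rhoB (q + 1) * rhoB (q + 1)))⁻¹) := by
      calc ((rhoB (q + 1) * rhoB (q + 1)) * rB (q + 1 + 1) (q + 1) * ((rhoB (q + 1) * rhoB (q + 1)))⁻¹)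
            * ((rhoB (q + 1) * rhoB (q + 1)) * rB (q + 1 + 1) (q + 1) * ((rhoB (q + 1) * rhoB (q + 1)))⁻¹)
          = ((rhoB (q + 1) * rhoB (q + 1)) * (rB (q + 1 + 1) (q + 1) * rB (q + 1 + 1) (q + 1)))
              * ((rhoB (q + 1) * rhoB (q + 1)))⁻¹ := by group
        _ = (rB (q + 1 + 1) 1 * ((rhoB (q + 1) * rhoB (q + 1)) * rB (q + 1 + 1) (q + 1)))
              * ((rhoB (q + 1) * rhoB (q + 1)))⁻¹ := by rw [key2]
        _ = rB (q + 1 + 1) 1 * ((rhoB (q + 1) * rhoB (q + 1)) * rB (q + 1 + 1) (q + 1)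
              * ((rhoB (q + 1) * rhoB (q + 1)))⁻¹) := by group
    exact mul_right_cancel hY

end ArtinBAux

/-- `ρ_B r_i ρ_B⁻¹ = r_{i+1}` for `1 ≤ i ≤ n-1`, and `ρ_B² rₙ ρ_B⁻² = r₁`. -/
theorem stmt4 (n : ℕ) (hn : 1 ≤ n) :
    (∀ i : ℕ, 1 ≤ i → i ≤ n - 1 →
      rhoB n * rB (n + 1) i * (rhoB n)⁻¹ = rB (n + 1) (i + 1)) ∧
    rhoB n ^ 2 * rB (n + 1) n * (rhoB n ^ 2)⁻¹ = rB (n + 1) 1 :=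
  ArtinBAux.stmt4' n hn
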